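/- Let F be a field with char(F) = 0 or char(F) > n. Then the ideal I_{n,m} is spanned as an F-vector space by the elements P_n(w_1,…,w_n), where w_1,…,w_n range over all non-empty monomials in x_1,…,x_m. -/

import Mathlib

/-!
Common definitions: the free algebra side (`d_F(n,m)`) and the matrix-invariant side
(`β_F(n,m)`).
-/

/-- The augmentation ideal `F_m⁺` of the free associative algebra `F⟨x_1,…,x_m⟩`:
the two-sided ideal generated by the generators `x_1,…,x_m`. -/
def augIdeal (F : Type) [Field F] (m : ℕ) : TwoSidedIdeal (FreeAlgebra F (Fin m)) :=
  TwoSidedIdeal.span (Set.range (FreeAlgebra.ι F))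

/-- The two-sided ideal `I_{n,m}` of `F⟨x_1,…,x_m⟩` generated by the `n`-th powers of
elements of the augmentation ideal `F_m⁺`. -/
def nilIdeal (F : Type) [Field F] (n m : ℕ) : TwoSidedIdeal (FreeAlgebra F (Fin m)) :=
  TwoSidedIdeal.span {w | ∃ a ∈ augIdeal F m, w = a ^ n}

/-- The set of positive integers `d` such that every product of `d` generators
`x_{i_1} ⋯ x_{i_d}` lies in `I_{n,m}`. -/
def dSet (F : Type) [Field F] (n m : ℕ) : Set ℕ :=
  {d | 0 < d ∧ ∀ i : Fin d → Fin m,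
    (List.ofFn fun t => FreeAlgebra.ι F (i t)).prod ∈ nilIdeal F n m}

/-- `d_F(n,m)`: the minimal positive integer `d` such that all monomials
`x_{i_1} ⋯ x_{i_d}` of length `d` lie in `I_{n,m}`. -/
noncomputable def dF (F : Type) [Field F] (n m : ℕ) : ℕ := sInf (dSet F n m)

/-- `w` is a non-empty monomial in the generators `x_1,…,x_m`. -/
def IsMonomialF (F : Type) [Field F] (m : ℕ) (w : FreeAlgebra F (Fin m)) : Prop :=
  ∃ l : List (Fin m), l ≠ [] ∧ w = (l.map (FreeAlgebra.ι F)).prod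

/-! ### Auxiliary machinery -/

namespace NilAux

open Finset Polynomial

/-! #### Vandermonde extraction -/

lemma vdm_extract {F : Type} [Field F] {M : Type*} [AddCommGroup M] [Module F M]
    (V : Submodule F M) (D : ℕ) (p : Fin (D+1) → F) (hp : Function.Injective p)
    (g : ℕ → M) (hyp : ∀ i : Fin (D+1), (∑ j ∈ Finset.range (D+1), p i ^ j • g j) ∈ V) :
    ∀ j, j < D + 1 → g j ∈ V := by
  intro j hj
  set A1 := Matrix.vandermonde p with hA1
  have hdet : A1.det ≠ 0 := Matrix.det_vandermonde_ne_zero_iff.mpr hp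
  have hinv : A1⁻¹ * A1 = 1 := Matrix.nonsing_inv_mul A1 (isUnit_iff_ne_zero.mpr hdet)
  have key : g j = ∑ i : Fin (D+1), A1⁻¹ ⟨j, hj⟩ i •
      (∑ j' ∈ Finset.range (D+1), p i ^ j' • g j') := by
    have hrow : ∀ i : Fin (D+1), (∑ j' ∈ Finset.range (D+1), p i ^ j' • g j')
        = ∑ j' : Fin (D+1), A1 i j' • g j' := by
      intro i
      rw [← Fin.sum_univ_eq_sum_range fun j' => p i ^ j' • g j']
      rfl
    calc g j = ∑ j' : Fin (D+1), ((1 : Matrix (Fin (D+1)) (Fin (D+1)) F) ⟨j, hj⟩ j') • g j' := by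
          rw [Finset.sum_congr rfl (fun j' _ => by rw [Matrix.one_apply, ite_smul, one_smul, zero_smul])]
          rw [Finset.sum_ite_eq]
          simp
      _ = ∑ j' : Fin (D+1), ((A1⁻¹ * A1) ⟨j, hj⟩ j') • g j' := by rw [hinv]
      _ = ∑ j' : Fin (D+1), ∑ i : Fin (D+1), (A1⁻¹ ⟨j, hj⟩ i * A1 i j') • g j' := by
          refine Finset.sum_congr rfl fun j' _ => ?_
          rw [Matrix.mul_apply, Finset.sum_smul]
      _ = ∑ i : Fin (D+1), ∑ j' : Fin (D+1), A1⁻¹ ⟨j, hj⟩ i • (A1 i j' • g j') := by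
          rw [Finset.sum_comm]
          simp [mul_smul]
      _ = ∑ i : Fin (D+1), A1⁻¹ ⟨j, hj⟩ i • (∑ j' ∈ Finset.range (D+1), p i ^ j' • g j') := by
          refine Finset.sum_congr rfl fun i _ => ?_
          rw [hrow, Finset.smul_sum]
  rw [key]
  exact Submodule.sum_mem _ fun i _ => V.smul_mem _ (hyp i)

/-! #### Characteristic facts -/

variable {F : Type} [Field F]

lemma cast_inj_of_char {n : ℕ} (hchar : ringChar F = 0 ∨ n < ringChar F) (k : ℕ) (hk : k ≤ n) :
    Function.Injective (fun i : Fin (k+1) => ((i : ℕ) : F)) := by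
  intro i j hij
  rcases hchar with h0 | hp
  · haveI := ringChar.charP F
    rw [h0] at this
    haveI : CharZero F := CharP.charP_to_charZero F
    exact Fin.ext (Nat.cast_injective hij)
  · haveI := ringChar.charP F
    have := CharP.natCast_injOn_Iio F (ringChar F)
    exact Fin.ext (this (by simp only [Set.mem_Iio]; omega) (by simp only [Set.mem_Iio]; omega) hij)

lemma cast_ne_zero_of_char {n : ℕ} (hchar : ringChar F = 0 ∨ n < ringChar F) (k : ℕ)
    (hk0 : 0 < k) (hkn : k ≤ n) : (k : F) ≠ 0 := by
  rcases hchar with h0 | hp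
  · haveI := ringChar.charP F
    rw [h0] at this
    haveI : CharZero F := CharP.charP_to_charZero F
    exact Nat.cast_ne_zero.mpr hk0.ne'
  · haveI := ringChar.charP F
    intro h
    have := (CharP.cast_eq_zero_iff F (ringChar F) k).mp h
    have := Nat.le_of_dvd hk0 this
    omega

lemma factorial_cast_ne_zero_of_char {n : ℕ} (hchar : ringChar F = 0 ∨ n < ringChar F) :
    ((Nat.factorial n : ℕ) : F) ≠ 0 := by
  rcases hchar with h0 | hp
  · haveI := ringChar.charP F
    rw [h0] at this
    haveI : CharZero F := CharP.charP_to_charZero F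
    exact Nat.cast_ne_zero.mpr (Nat.factorial_ne_zero n)
  · haveI := ringChar.charP F
    have hprime : (ringChar F).Prime := by
      rcases CharP.char_is_prime_or_zero F (ringChar F) with h | h
      · exact h
      · omega
    intro h
    have := (CharP.cast_eq_zero_iff F (ringChar F) _).mp h
    have := (Nat.Prime.dvd_factorial hprime).mp this
    omega

/-! #### The inclusion–exclusion (polarization) identity -/

section IdentA

variable {R : Type*} [Ring R]

lemma pow_eq_sum_pi (n : ℕ) (w : Fin n → R) (S : Finset (Fin n)) :
    (∑ i ∈ S, w i) ^ n
      = ∑ r ∈ Fintype.piFinset (fun _ : Fin n => S), (List.ofFn fun t => w (r t)).prod := by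
  have h := (MultilinearMap.mkPiAlgebraFin ℤ n R).map_sum_finset (fun _ j => w j)
    (fun _ : Fin n => S)
  simp only [MultilinearMap.mkPiAlgebraFin_apply] at h
  rw [← h]
  rw [List.ofFn_const]
  rw [List.prod_replicate]

lemma alt_sum_subsets (n : ℕ) (T : Finset (Fin n)) :
    (∑ S ∈ (Finset.univ : Finset (Fin n)).powerset.filter (fun S => T ⊆ S),
      (-1 : F) ^ (n - S.card)) = if T = Finset.univ then 1 else 0 := by
  have key : (∑ S ∈ (Finset.univ : Finset (Fin n)).powerset.filter (fun S => T ⊆ S),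
      (-1 : F) ^ (n - S.card)) = ∑ U ∈ Tᶜ.powerset, (-1 : F) ^ U.card := by
    refine Finset.sum_nbij' (fun S => Sᶜ) (fun U => Uᶜ) ?_ ?_ ?_ ?_ ?_
    · intro S hS
      simp only [mem_filter, mem_powerset] at hS
      simpa only [mem_powerset] using Finset.compl_subset_compl.mpr hS.2
    · intro U hU
      simp only [mem_powerset] at hU
      simp only [mem_filter, mem_powerset]
      exact ⟨Finset.subset_univ _, by simpa using Finset.compl_subset_compl.mpr hU⟩
    · intro S _; simp
    · intro U _; simp
    · intro S _
      congr 1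
      rw [Finset.card_compl]
      simp
  rw [key]
  have := Finset.sum_powerset_neg_one_pow_card (x := Tᶜ)
  have hcast : ∑ U ∈ Tᶜ.powerset, (-1 : F) ^ U.card
      = (((∑ U ∈ Tᶜ.powerset, (-1 : ℤ) ^ U.card) : ℤ) : F) := by
    push_cast
    rfl
  rw [hcast, this]
  by_cases h : Tᶜ = ∅
  · rw [if_pos h, if_pos (by simpa [Finset.compl_eq_empty_iff] using h)]
    simp
  · rw [if_neg h, if_neg (by intro hT; apply h; simp [hT])]
    simp

lemma ident_A [Algebra F R] (n : ℕ) (w : Fin n → R) :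
    ∑ S ∈ (Finset.univ : Finset (Fin n)).powerset,
        (-1 : F) ^ (n - S.card) • (∑ i ∈ S, w i) ^ n
      = ∑ π : Equiv.Perm (Fin n), (List.ofFn fun t => w (π t)).prod := by
  classical
  have hpi : ∀ S : Finset (Fin n), Fintype.piFinset (fun _ : Fin n => S)
      = Finset.univ.filter (fun r : Fin n → Fin n => ∀ t, r t ∈ S) := by
    intro S; ext r; simp [Fintype.mem_piFinset]
  calc ∑ S ∈ (Finset.univ : Finset (Fin n)).powerset,
        (-1 : F) ^ (n - S.card) • (∑ i ∈ S, w i) ^ n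
      = ∑ S ∈ (Finset.univ : Finset (Fin n)).powerset,
          ∑ r ∈ (Finset.univ : Finset (Fin n → Fin n)),
            (if (∀ t, r t ∈ S) then
              (-1 : F) ^ (n - S.card) • (List.ofFn fun t => w (r t)).prod else 0) := by
        refine Finset.sum_congr rfl fun S _ => ?_
        rw [pow_eq_sum_pi n w S, Finset.smul_sum, hpi S, Finset.sum_filter]
    _ = ∑ r ∈ (Finset.univ : Finset (Fin n → Fin n)),
          ∑ S ∈ (Finset.univ : Finset (Fin n)).powerset,
            (if (∀ t, r t ∈ S) then
              (-1 : F) ^ (n - S.card) • (List.ofFn fun t => w (r t)).prod else 0) :=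
        Finset.sum_comm
    _ = ∑ r ∈ (Finset.univ : Finset (Fin n → Fin n)),
          (if Finset.image r Finset.univ = Finset.univ then (1:F) else 0) •
            (List.ofFn fun t => w (r t)).prod := by
        refine Finset.sum_congr rfl fun r _ => ?_
        have h1 : ∀ S : Finset (Fin n), (∀ t, r t ∈ S) ↔ Finset.image r Finset.univ ⊆ S := by
          intro S
          rw [Finset.image_subset_iff]
          simp
        calc ∑ S ∈ (Finset.univ : Finset (Fin n)).powerset,
            (if (∀ t, r t ∈ S) then
              (-1 : F) ^ (n - S.card) • (List.ofFn fun t => w (r t)).prod else 0)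
            = ∑ S ∈ (Finset.univ : Finset (Fin n)).powerset.filter
                (fun S => Finset.image r Finset.univ ⊆ S),
                (-1 : F) ^ (n - S.card) • (List.ofFn fun t => w (r t)).prod := by
              rw [Finset.sum_filter]
              exact Finset.sum_congr rfl fun S _ => if_congr (h1 S) rfl rfl
          _ = (∑ S ∈ (Finset.univ : Finset (Fin n)).powerset.filter
                (fun S => Finset.image r Finset.univ ⊆ S),
                (-1 : F) ^ (n - S.card)) • (List.ofFn fun t => w (r t)).prod := by
              rw [Finset.sum_smul]
          _ = (if Finset.image r Finset.univ = Finset.univ then (1:F) else 0) •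
              (List.ofFn fun t => w (r t)).prod := by
              rw [alt_sum_subsets]
    _ = ∑ r ∈ (Finset.univ : Finset (Fin n → Fin n)).filter
          (fun r => Finset.image r Finset.univ = Finset.univ),
          (List.ofFn fun t => w (r t)).prod := by
        rw [Finset.sum_filter]
        refine Finset.sum_congr rfl fun r _ => ?_
        split
        · rw [one_smul]
        · rw [zero_smul]
    _ = ∑ π : Equiv.Perm (Fin n), (List.ofFn fun t => w (π t)).prod := by
        have hbij : ∀ r : Fin n → Fin n, Finset.image r Finset.univ = Finset.univ →
            Function.Bijective r := by
          intro r hr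
          refine Finite.surjective_iff_bijective.mp fun i => ?_
          have : i ∈ Finset.image r Finset.univ := by rw [hr]; exact Finset.mem_univ i
          obtain ⟨t, _, ht⟩ := Finset.mem_image.mp this
          exact ⟨t, ht⟩
        refine Finset.sum_bij'
          (fun r hr => Equiv.ofBijective r (hbij r (by simpa using hr)))
          (fun π _ => ⇑π) ?_ ?_ ?_ ?_ ?_
        · intro r hr; exact Finset.mem_univ _
        · intro π _
          simp only [Finset.mem_filter]
          refine ⟨Finset.mem_univ _, Finset.eq_univ_iff_forall.mpr fun i => ?_⟩
          exact Finset.mem_image.mpr ⟨π.symm i, Finset.mem_univ _, π.apply_symm_apply i⟩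
        · intro r hr; rfl
        · intro π _; exact Equiv.ext fun x => rfl
        · intro r hr; rfl

end IdentA

/-! #### Multilinear span lemma -/

lemma multilinear_mem_span {M : Type*} [AddCommGroup M] [Module F M]
    {N : Type*} [AddCommGroup N] [Module F N]
    {n : ℕ} (f : MultilinearMap F (fun _ : Fin n => M) N)
    (s : Set M) (w : Fin n → M) (hw : ∀ i, w i ∈ Submodule.span F s) :
    f w ∈ Submodule.span F {z | ∃ v : Fin n → M, (∀ i, v i ∈ s) ∧ z = f v} := by
  classical
  set T := Submodule.span F {z | ∃ v : Fin n → M, (∀ i, v i ∈ s) ∧ z = f v} with hT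
  suffices H : ∀ (t : Finset (Fin n)) (w : Fin n → M), (∀ i, w i ∈ Submodule.span F s) →
      (∀ i, i ∉ t → w i ∈ s) → f w ∈ T by
    exact H Finset.univ w hw (fun i hi => absurd (Finset.mem_univ i) hi)
  intro t
  induction t using Finset.induction with
  | empty =>
    intro w _ hs
    exact Submodule.subset_span ⟨w, fun i => hs i (Finset.notMem_empty i), rfl⟩
  | @insert j t hj IH =>
    intro w hspan hs
    have hwj := hspan j
    have key : ∀ (x : M), x ∈ Submodule.span F s → f (Function.update w j x) ∈ T := by
      intro x hx
      induction hx using Submodule.span_induction with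
      | mem x hxs =>
        refine IH (Function.update w j x) ?_ ?_
        · intro i
          by_cases hij : i = j
          · subst hij; rw [Function.update_self]; exact Submodule.subset_span hxs
          · rw [Function.update_of_ne hij]; exact hspan i
        · intro i hit
          by_cases hij : i = j
          · subst hij; rw [Function.update_self]; exact hxs
          · rw [Function.update_of_ne hij]
            exact hs i (by simp [hij, hit])
      | zero => rw [f.map_update_zero]; exact T.zero_mem
      | add x y _ _ hx hy => rw [f.map_update_add]; exact T.add_mem hx hy
      | smul c x _ hx => rw [f.map_update_smul]; exact T.smul_mem c hx
    have := key (w j) hwj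
    rwa [Function.update_eq_self] at this

/-! #### Polynomial coefficient machinery -/

section Poly

variable {R : Type*} [Ring R]

/-- `DD c b N = ∑_{k<N} b^k c b^(N-1-k)`. -/
noncomputable def DD (c b : R) (N : ℕ) : R := ∑ k ∈ Finset.range N, b^k * c * b^(N-1-k)

lemma coeff_mul_one' (p q : R[X]) :
    (p * q).coeff 1 = p.coeff 0 * q.coeff 1 + p.coeff 1 * q.coeff 0 := by
  rw [Polynomial.coeff_mul]
  rw [Finset.Nat.sum_antidiagonal_eq_sum_range_succ_mk]
  rw [Finset.sum_range_succ, Finset.sum_range_succ, Finset.sum_range_zero]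
  simp

lemma coeff_zero_pow (b c : R) (N : ℕ) : ((C b + C c * X)^N).coeff 0 = b ^ N := by
  induction N with
  | zero => simp
  | succ N IH =>
    rw [pow_succ, Polynomial.mul_coeff_zero, IH]
    simp [pow_succ]

lemma coeff_one_pow (b c : R) (N : ℕ) : ((C b + C c * X)^N).coeff 1 = DD c b N := by
  induction N with
  | zero => simp [DD, Polynomial.coeff_one]
  | succ N IH =>
    rw [pow_succ, coeff_mul_one', IH, coeff_zero_pow]
    have h1 : (C b + C c * X).coeff 1 = c := by simp
    have h0 : (C b + C c * X).coeff 0 = b := by simp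
    rw [h1, h0]
    rw [DD, DD, Finset.sum_range_succ]
    have : ∀ k ∈ Finset.range N, b^k * c * b^(N-1-k) * b = b^k * c * b^(N-k) := by
      intro k hk
      rw [Finset.mem_range] at hk
      rw [mul_assoc, ← pow_succ]
      congr 2
      omega
    rw [Finset.sum_mul]
    simp only [Nat.add_sub_cancel]
    rw [Finset.sum_congr rfl this, Nat.sub_self, pow_zero, mul_one]
    exact add_comm _ _

lemma natDegree_base_le (b c : R) : (C b + C c * X).natDegree ≤ 1 :=
  le_trans (Polynomial.natDegree_add_le _ _) (by
    simp only [Polynomial.natDegree_C, Nat.zero_le, max_le_iff, true_and]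
    exact le_trans (Polynomial.natDegree_C_mul_le c X) Polynomial.natDegree_X_le)

variable [Algebra F R]

noncomputable def evalRH (s : F) : R[X] →+* R :=
  Polynomial.eval₂RingHom' (RingHom.id R) (algebraMap F R s)
    (fun a => (Algebra.commutes s a).symm)

lemma evalRH_C (s : F) (a : R) : evalRH (R := R) s (C a) = a := by
  show Polynomial.eval₂ (RingHom.id R) (algebraMap F R s) (C a) = a
  rw [Polynomial.eval₂_C]; rfl

lemma evalRH_base (s : F) (b c : R) : evalRH s (C b + C c * X) = b + s • c := by
  have : evalRH (R := R) s (C c * X) = c * algebraMap F R s := by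
    show Polynomial.eval₂ (RingHom.id R) (algebraMap F R s) (C c * X) = _
    rw [Polynomial.eval₂_mul_X, Polynomial.eval₂_C]; rfl
  rw [map_add, evalRH_C, this, ← Algebra.commutes s c, ← Algebra.smul_def]

lemma evalRH_eq_sum (s : F) (p : R[X]) (N : ℕ) (hN : p.natDegree < N) :
    evalRH s p = ∑ j ∈ Finset.range N, s^j • p.coeff j := by
  have : evalRH (R := R) s p = Polynomial.eval₂ (RingHom.id R) (algebraMap F R s) p := rfl
  rw [this, Polynomial.eval₂_eq_sum_range' (RingHom.id R) hN]
  refine Finset.sum_congr rfl fun j _ => ?_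
  rw [RingHom.id_apply, ← map_pow, ← Algebra.commutes (s^j) (p.coeff j), ← Algebra.smul_def]

lemma DD_self_sq (b : R) (N : ℕ) : DD (b*b) b N = N • (b^(N+1)) := by
  rw [DD]
  have : ∀ k ∈ Finset.range N, b^k * (b*b) * b^(N-1-k) = b^(N+1) := by
    intro k hk
    rw [Finset.mem_range] at hk
    have h2 : b^k * (b*b) = b^(k+2) := by rw [pow_add, pow_two]
    rw [h2, ← pow_add]
    congr 1
    omega
  rw [Finset.sum_congr rfl this, Finset.sum_const, Finset.card_range]

lemma coeff01 (p q : R[X]) (x : R) :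
    ((p * C x) * q).coeff 1 = p.coeff 0 * x * q.coeff 1 + p.coeff 1 * x * q.coeff 0 := by
  rw [coeff_mul_one', Polynomial.coeff_mul_C, Polynomial.coeff_mul_C]

noncomputable def QQ (x b c : R) (n : ℕ) : R[X] :=
  ∑ k ∈ Finset.range n, (C b + C c * X)^k * C x * (C b + C c * X)^(n-1-k)

lemma QQ_natDegree (x b c : R) (n : ℕ) (hn : 0 < n) : (QQ x b c n).natDegree < n := by
  have : (QQ x b c n).natDegree ≤ n - 1 := by
    refine Polynomial.natDegree_sum_le_of_forall_le _ _ fun k hk => ?_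
    rw [Finset.mem_range] at hk
    calc ((C b + C c * X)^k * C x * (C b + C c * X)^(n-1-k)).natDegree
        ≤ ((C b + C c * X)^k * C x).natDegree + ((C b + C c * X)^(n-1-k)).natDegree :=
          Polynomial.natDegree_mul_le
      _ ≤ (((C b + C c * X)^k).natDegree + (C x).natDegree) + ((C b + C c * X)^(n-1-k)).natDegree :=
          Nat.add_le_add_right Polynomial.natDegree_mul_le _
      _ ≤ (k * 1 + 0) + (n-1-k) * 1 := by
          refine add_le_add (add_le_add ?_ ?_) ?_
          · exact le_trans (Polynomial.natDegree_pow_le)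
              (Nat.mul_le_mul_left k (natDegree_base_le b c))
          · simp
          · exact le_trans (Polynomial.natDegree_pow_le)
              (Nat.mul_le_mul_left _ (natDegree_base_le b c))
      _ ≤ n - 1 := by omega
  omega

lemma QQ_eval (x b c : R) (n : ℕ) (s : F) :
    evalRH s (QQ x b c n) = DD x (b + s • c) n := by
  rw [QQ, map_sum, DD]
  refine Finset.sum_congr rfl fun k _ => ?_
  rw [map_mul, map_mul, map_pow, map_pow, evalRH_base, evalRH_C]

lemma QQ_coeff1 (x b c : R) (n : ℕ) :
    (QQ x b c n).coeff 1
      = ∑ k ∈ Finset.range n, (b^k * x * DD c b (n-1-k) + DD c b k * x * b^(n-1-k)) := by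
  rw [QQ, Polynomial.finset_sum_coeff]
  refine Finset.sum_congr rfl fun k _ => ?_
  rw [coeff01, coeff_zero_pow, coeff_one_pow, coeff_zero_pow, coeff_one_pow]

end Poly

/-! #### Natural-number smul summation identities -/

section SumId
variable {M : Type*} [AddCommMonoid M]

private lemma SF_add (n : ℕ) (T : ℕ → M) (c d : ℕ → ℕ) :
    (∑ k ∈ range (n+1), c k • T k) + (∑ k ∈ range (n+1), d k • T k)
      = ∑ k ∈ range (n+1), (c k + d k) • T k := by
  rw [← Finset.sum_add_distrib]
  exact Finset.sum_congr rfl fun k _ => (add_nsmul (T k) (c k) (d k)).symm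

private lemma SF_smul (n : ℕ) (T : ℕ → M) (a : ℕ) (c : ℕ → ℕ) :
    a • (∑ k ∈ range (n+1), c k • T k) = ∑ k ∈ range (n+1), (a * c k) • T k := by
  rw [Finset.smul_sum]
  exact Finset.sum_congr rfl fun k _ => smul_smul a (c k) (T k)

private lemma hT0 (n : ℕ) (T : ℕ → M) :
    n • T 0 = ∑ k ∈ range (n+1), (if k = 0 then n else 0) • T k := by
  rw [Finset.sum_eq_single 0 (fun b _ hb => by rw [if_neg hb, zero_smul])
    (fun h => absurd (Finset.mem_range.mpr (Nat.succ_pos n)) h)]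
  rw [if_pos rfl]

private lemma hTn (n : ℕ) (T : ℕ → M) :
    n • T n = ∑ k ∈ range (n+1), (if k = n then n else 0) • T k := by
  rw [Finset.sum_eq_single n (fun b _ hb => by rw [if_neg hb, zero_smul])
    (fun h => absurd (Finset.mem_range.mpr (Nat.lt_succ_self n)) h)]
  rw [if_pos rfl]

private lemma hG1 (n : ℕ) (T : ℕ → M) :
    (∑ k ∈ range n, T k) = ∑ k ∈ range (n+1), (if k < n then 1 else 0) • T k := by
  rw [Finset.sum_range_succ, if_neg (lt_irrefl n), zero_smul, add_zero]
  exact Finset.sum_congr rfl fun k hk => by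
    rw [if_pos (Finset.mem_range.mp hk), one_smul]

private lemma hG2 (n : ℕ) (T : ℕ → M) :
    (∑ k ∈ range n, T (k+1)) = ∑ k ∈ range (n+1), (if k = 0 then 0 else 1) • T k := by
  rw [Finset.sum_range_succ', if_pos rfl, zero_smul, add_zero]
  exact (Finset.sum_congr rfl fun k hk => by
    rw [if_neg (Nat.succ_ne_zero k), one_smul]).symm

private lemma hG3 (n : ℕ) (T : ℕ → M) :
    (∑ k ∈ range n, (k • T (k+1) + (n-1-k) • T k))
      = ∑ k ∈ range (n+1), ((k-1) + (n-1-k)) • T k := by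
  rw [Finset.sum_add_distrib, ← SF_add]
  congr 1
  · rw [Finset.sum_range_succ']
    simp only [Nat.add_sub_cancel, Nat.zero_sub, zero_smul, add_zero]
  · rw [Finset.sum_range_succ]
    have : n - 1 - n = 0 := by omega
    rw [this, zero_smul, add_zero]

lemma claim1 (n : ℕ) (hn : 1 ≤ n) (T : ℕ → M) :
    n • T 0 + (n-1) • (∑ k ∈ range n, T (k+1))
      = (∑ k ∈ range n, (k • T (k+1) + (n-1-k) • T k)) + ∑ k ∈ range n, T k := by
  rw [hT0 n T, hG2 n T, hG3 n T, hG1 n T, SF_smul n T (n-1), SF_add n T, SF_add n T]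
  refine Finset.sum_congr rfl fun k hk => ?_
  rw [Finset.mem_range] at hk
  congr 1
  by_cases h0 : k = 0
  · rw [if_pos h0, if_pos h0, if_pos (by omega : k < n)]; omega
  · rw [if_neg h0, if_neg h0]
    by_cases h2 : k < n
    · rw [if_pos h2]; omega
    · rw [if_neg h2]; omega

lemma claim2 (n : ℕ) (hn : 1 ≤ n) (T : ℕ → M) :
    n • T n + (n-1) • (∑ k ∈ range n, T k)
      = (∑ k ∈ range n, (k • T (k+1) + (n-1-k) • T k)) + ∑ k ∈ range n, T (k+1) := by
  rw [hTn n T, hG1 n T, hG3 n T, hG2 n T, SF_smul n T (n-1), SF_add n T, SF_add n T]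
  refine Finset.sum_congr rfl fun k hk => ?_
  rw [Finset.mem_range] at hk
  congr 1
  by_cases h : k = n
  · rw [if_pos h, if_neg (by omega : ¬ k < n), if_neg (by omega : ¬ k = 0)]; omega
  · rw [if_neg h, if_pos (by omega : k < n)]
    by_cases h0 : k = 0
    · rw [if_pos h0]; omega
    · rw [if_neg h0]; omega

end SumId

end NilAux

/-! #### Free algebra specific lemmas -/

namespace NilFA

open Finset Polynomial NilAux

variable {F : Type} [Field F] {m : ℕ}

local notation "A" => FreeAlgebra F (Fin m)

lemma gen_mem_aug (i : Fin m) : FreeAlgebra.ι F i ∈ augIdeal F m :=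
  TwoSidedIdeal.subset_span ⟨i, rfl⟩

lemma aug_smul (s : F) {x : A} (hx : x ∈ augIdeal F m) : s • x ∈ augIdeal F m := by
  rw [Algebra.smul_def]
  exact TwoSidedIdeal.mul_mem_left _ _ _ hx

lemma monomial_mem_aug {w : A} (hw : IsMonomialF F m w) : w ∈ augIdeal F m := by
  obtain ⟨l, hl, rfl⟩ := hw
  cases l with
  | nil => exact absurd rfl hl
  | cons i l =>
    rw [List.map_cons, List.prod_cons]
    exact TwoSidedIdeal.mul_mem_right _ _ _ (gen_mem_aug i)

lemma aug_le_mono_span {x : A} (hx : x ∈ augIdeal F m) :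
    x ∈ Submodule.span F {w : A | IsMonomialF F m w} := by
  set Msub := Submodule.span F {w : A | IsMonomialF F m w} with hM
  have hmul : ∀ x : A, (∀ z ∈ Msub, x * z ∈ Msub) ∧ (∀ z ∈ Msub, z * x ∈ Msub) := by
    intro x
    induction x using FreeAlgebra.induction with
    | grade0 r =>
      constructor
      · intro z hz; rw [← Algebra.smul_def]; exact Msub.smul_mem r hz
      · intro z hz; rw [← Algebra.commutes r z, ← Algebra.smul_def]; exact Msub.smul_mem r hz
    | grade1 i =>
      constructor
      · intro z hz
        induction hz using Submodule.span_induction with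
        | mem z hzm =>
          obtain ⟨l, hl, rfl⟩ := hzm
          refine Submodule.subset_span ⟨i :: l, List.cons_ne_nil i l, ?_⟩
          rw [List.map_cons, List.prod_cons]
        | zero => rw [mul_zero]; exact Msub.zero_mem
        | add u v _ _ hu hv => rw [mul_add]; exact Msub.add_mem hu hv
        | smul c u _ hu => rw [mul_smul_comm]; exact Msub.smul_mem c hu
      · intro z hz
        induction hz using Submodule.span_induction with
        | mem z hzm =>
          obtain ⟨l, hl, rfl⟩ := hzm
          refine Submodule.subset_span ⟨l ++ [i], by simp, ?_⟩
          rw [List.map_append, List.prod_append]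
          simp
        | zero => rw [zero_mul]; exact Msub.zero_mem
        | add u v _ _ hu hv => rw [add_mul]; exact Msub.add_mem hu hv
        | smul c u _ hu => rw [smul_mul_assoc]; exact Msub.smul_mem c hu
    | mul u v hu hv =>
      constructor
      · intro z hz; rw [mul_assoc]; exact hu.1 _ (hv.1 z hz)
      · intro z hz; rw [← mul_assoc]; exact hv.2 _ (hu.2 z hz)
    | add u v hu hv =>
      constructor
      · intro z hz; rw [add_mul]; exact Msub.add_mem (hu.1 z hz) (hv.1 z hz)
      · intro z hz; rw [mul_add]; exact Msub.add_mem (hu.2 z hz) (hv.2 z hz)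
  have := TwoSidedIdeal.mem_span_iff.mp hx
    (TwoSidedIdeal.mk' (Msub : Set A) Msub.zero_mem (fun ha hb => Msub.add_mem ha hb)
      (fun ha => Msub.neg_mem ha)
      (fun {u v} hv => (hmul u).1 v hv)
      (fun {u v} hu => (hmul v).2 u hu))
  simp only [TwoSidedIdeal.mem_mk'] at this
  refine this ?_
  rintro w ⟨i, rfl⟩
  refine TwoSidedIdeal.mem_mk' _ _ _ _ _ _ _ |>.mpr ?_
  exact Submodule.subset_span ⟨[i], by simp, by simp⟩

end NilFA

namespace NilFA

variable {F : Type} [Field F] {m : ℕ}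

local notation "A" => FreeAlgebra F (Fin m)

open Finset Polynomial NilAux

/-- The span of `n`-th powers of augmentation-ideal elements. -/
noncomputable def WS (F : Type) [Field F] (n m : ℕ) : Submodule F (FreeAlgebra F (Fin m)) :=
  Submodule.span F {z | ∃ a ∈ augIdeal F m, z = a ^ n}

lemma pow_mem_WS {n : ℕ} {a : A} (ha : a ∈ augIdeal F m) : a ^ n ∈ WS F n m :=
  Submodule.subset_span ⟨a, ha, rfl⟩

lemma DD_mem {n : ℕ} (hn : 0 < n) (hchar : ringChar F = 0 ∨ n < ringChar F)
    {c b : A} (hc : c ∈ augIdeal F m) (hb : b ∈ augIdeal F m) :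
    DD c b n ∈ WS F n m := by
  have hinj := cast_inj_of_char hchar n le_rfl
  have hdeg : ((C b + C c * X)^n).natDegree < n + 1 := by
    calc ((C b + C c * X)^n).natDegree ≤ n * (C b + C c * X).natDegree :=
          Polynomial.natDegree_pow_le
      _ ≤ n * 1 := Nat.mul_le_mul_left n (natDegree_base_le b c)
      _ < n + 1 := by omega
  have hyp : ∀ i : Fin (n+1),
      (∑ j ∈ Finset.range (n+1), ((i:ℕ):F) ^ j • ((C b + C c * X)^n).coeff j) ∈ WS F n m := by
    intro i
    rw [← evalRH_eq_sum _ _ (n+1) hdeg, map_pow, evalRH_base]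
    exact pow_mem_WS ((augIdeal F m).add_mem hb (aug_smul _ hc))
  have := vdm_extract (WS F n m) n _ hinj _ hyp 1 (by omega)
  rwa [coeff_one_pow] at this

lemma Qcoeff_mem {n : ℕ} (hn2 : 2 ≤ n) (hchar : ringChar F = 0 ∨ n < ringChar F)
    {x b : A} (hx : x ∈ augIdeal F m) (hb : b ∈ augIdeal F m) :
    (QQ x b (b*b) n).coeff 1 ∈ WS F n m := by
  have hinj := cast_inj_of_char hchar (n-1) (by omega)
  have hr : n - 1 + 1 = n := by omega
  have hyp : ∀ i : Fin ((n-1)+1),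
      (∑ j ∈ Finset.range ((n-1)+1), ((i:ℕ):F) ^ j • (QQ x b (b*b) n).coeff j) ∈ WS F n m := by
    intro i
    have hrange : Finset.range (n-1+1) = Finset.range n := by rw [hr]
    rw [hrange, ← evalRH_eq_sum _ _ n (QQ_natDegree _ _ _ _ (by omega)), QQ_eval]
    refine DD_mem (by omega) hchar hx ((augIdeal F m).add_mem hb (aug_smul _ ?_))
    exact TwoSidedIdeal.mul_mem_left _ _ _ hb
  exact vdm_extract (WS F n m) (n-1) _ hinj _ hyp 1 (by omega)

lemma assoc4 (u v w z : A) : u * (v * w) * z = u * v * (w * z) := by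
  rw [← mul_assoc u v w, mul_assoc (u*v) w z]

lemma TL {n : ℕ} (hn : 0 < n) (hchar : ringChar F = 0 ∨ n < ringChar F)
    {x b : A} (hx : x ∈ augIdeal F m) (hb : b ∈ augIdeal F m) :
    x * b ^ n ∈ WS F n m ∧ b ^ n * x ∈ WS F n m := by
  rcases lt_or_ge n 2 with h1 | h2
  · have hn1 : n = 1 := by omega
    subst hn1
    constructor
    · rw [pow_one]
      exact Submodule.subset_span ⟨x * b, TwoSidedIdeal.mul_mem_left _ _ _ hb, (pow_one _).symm⟩
    · rw [pow_one]
      exact Submodule.subset_span ⟨b * x, TwoSidedIdeal.mul_mem_right _ _ _ hb, (pow_one _).symm⟩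
  · set T : ℕ → A := fun k => b^k * x * b^(n-k) with hTdef
    have hG1mem : DD (x*b) b n ∈ WS F n m :=
      DD_mem hn hchar (TwoSidedIdeal.mul_mem_left _ _ _ hb) hb
    have hG2mem : DD (b*x) b n ∈ WS F n m :=
      DD_mem hn hchar (TwoSidedIdeal.mul_mem_right _ _ _ hb) hb
    have hG3mem : (QQ x b (b*b) n).coeff 1 ∈ WS F n m := Qcoeff_mem h2 hchar hx hb
    have hG1val : DD (x*b) b n = ∑ k ∈ Finset.range n, T k := by
      rw [DD]
      refine Finset.sum_congr rfl fun k hk => ?_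
      rw [Finset.mem_range] at hk
      show b^k * (x*b) * b^(n-1-k) = b^k * x * b^(n-k)
      rw [assoc4]
      congr 1
      rw [← pow_succ']
      congr 1
      omega
    have hG2val : DD (b*x) b n = ∑ k ∈ Finset.range n, T (k+1) := by
      rw [DD]
      refine Finset.sum_congr rfl fun k hk => ?_
      rw [Finset.mem_range] at hk
      show b^k * (b*x) * b^(n-1-k) = b^(k+1) * x * b^(n-(k+1))
      rw [← mul_assoc (b^k) b x, ← pow_succ]
      congr 2
      omega
    have hG3val : (QQ x b (b*b) n).coeff 1
        = ∑ k ∈ Finset.range n, (k • T (k+1) + (n-1-k) • T k) := by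
      rw [QQ_coeff1]
      refine Finset.sum_congr rfl fun k hk => ?_
      rw [Finset.mem_range] at hk
      rw [DD_self_sq, DD_self_sq, mul_smul_comm, smul_mul_assoc, smul_mul_assoc, add_comm]
      congr 2
      · show b^(k+1) * x * b^(n-1-k) = b^(k+1) * x * b^(n-(k+1))
        congr 2
        omega
      · show b^k * x * b^(n-1-k+1) = b^k * x * b^(n-k)
        congr 2
        omega
    have hnF : ((n:ℕ):F) ≠ 0 := cast_ne_zero_of_char hchar n hn le_rfl
    constructor
    · have hcl := claim1 n (by omega) T
      rw [← hG3val, ← hG1val, ← hG2val] at hcl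
      have key1 : (n:ℕ) • T 0
          = ((QQ x b (b*b) n).coeff 1 + DD (x*b) b n) - (n-1) • DD (b*x) b n :=
        eq_sub_of_add_eq hcl
      have hT0mem : (n:ℕ) • T 0 ∈ WS F n m := by
        rw [key1]
        exact sub_mem (add_mem hG3mem hG1mem) (nsmul_mem hG2mem _)
      have hT0 : T 0 = x * b^n := by simp [hTdef]
      have : x * b^n = ((n:F))⁻¹ • ((n:ℕ) • T 0) := by
        rw [← Nat.cast_smul_eq_nsmul F, smul_smul, inv_mul_cancel₀ hnF, one_smul, hT0]
      rw [this]
      exact Submodule.smul_mem _ _ hT0mem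
    · have hcl := claim2 n (by omega) T
      rw [← hG3val, ← hG1val, ← hG2val] at hcl
      have key2 : (n:ℕ) • T n
          = ((QQ x b (b*b) n).coeff 1 + DD (b*x) b n) - (n-1) • DD (x*b) b n :=
        eq_sub_of_add_eq hcl
      have hTnmem : (n:ℕ) • T n ∈ WS F n m := by
        rw [key2]
        exact sub_mem (add_mem hG3mem hG2mem) (nsmul_mem hG1mem _)
      have hTn : T n = b^n * x := by simp [hTdef]
      have : b^n * x = ((n:F))⁻¹ • ((n:ℕ) • T n) := by
        rw [← Nat.cast_smul_eq_nsmul F, smul_smul, inv_mul_cancel₀ hnF, one_smul, hTn]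
      rw [this]
      exact Submodule.smul_mem _ _ hTnmem

end NilFA

namespace NilFA

variable {F : Type} [Field F] {m : ℕ}

local notation "A" => FreeAlgebra F (Fin m)

open Finset NilAux

lemma WS_mul_left {n : ℕ} (hn : 0 < n) (hchar : ringChar F = 0 ∨ n < ringChar F) :
    ∀ (x z : A), z ∈ WS F n m → x * z ∈ WS F n m := by
  have step : ∀ x ∈ augIdeal F m, ∀ z ∈ WS F n m, x * z ∈ WS F n m := by
    intro x hx z hz
    induction hz using Submodule.span_induction with
    | mem z hzm =>
      obtain ⟨a, ha, rfl⟩ := hzm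
      exact (TL hn hchar hx ha).1
    | zero => rw [mul_zero]; exact (WS F n m).zero_mem
    | add u v _ _ hu hv => rw [mul_add]; exact (WS F n m).add_mem hu hv
    | smul c u _ hu => rw [mul_smul_comm]; exact (WS F n m).smul_mem c hu
  intro x
  induction x using FreeAlgebra.induction with
  | grade0 r => intro z hz; rw [← Algebra.smul_def]; exact (WS F n m).smul_mem r hz
  | grade1 i => intro z hz; exact step _ (gen_mem_aug i) z hz
  | mul u v hu hv => intro z hz; rw [mul_assoc]; exact hu _ (hv z hz)
  | add u v hu hv => intro z hz; rw [add_mul]; exact (WS F n m).add_mem (hu z hz) (hv z hz)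

lemma WS_mul_right {n : ℕ} (hn : 0 < n) (hchar : ringChar F = 0 ∨ n < ringChar F) :
    ∀ (x z : A), z ∈ WS F n m → z * x ∈ WS F n m := by
  have step : ∀ x ∈ augIdeal F m, ∀ z ∈ WS F n m, z * x ∈ WS F n m := by
    intro x hx z hz
    induction hz using Submodule.span_induction with
    | mem z hzm =>
      obtain ⟨a, ha, rfl⟩ := hzm
      exact (TL hn hchar hx ha).2
    | zero => rw [zero_mul]; exact (WS F n m).zero_mem
    | add u v _ _ hu hv => rw [add_mul]; exact (WS F n m).add_mem hu hv
    | smul c u _ hu => rw [smul_mul_assoc]; exact (WS F n m).smul_mem c hu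
  intro x
  induction x using FreeAlgebra.induction with
  | grade0 r =>
    intro z hz
    rw [← Algebra.commutes r z, ← Algebra.smul_def]
    exact (WS F n m).smul_mem r hz
  | grade1 i => intro z hz; exact step _ (gen_mem_aug i) z hz
  | mul u v hu hv => intro z hz; rw [← mul_assoc]; exact hv _ (hu z hz)
  | add u v hu hv => intro z hz; rw [mul_add]; exact (WS F n m).add_mem (hu z hz) (hv z hz)

lemma nil_le_WS {n : ℕ} (hn : 0 < n) (hchar : ringChar F = 0 ∨ n < ringChar F) :
    ∀ z ∈ nilIdeal F n m, z ∈ WS F n m := by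
  intro z hz
  have := TwoSidedIdeal.mem_span_iff.mp hz
    (TwoSidedIdeal.mk' ((WS F n m : Set A)) (WS F n m).zero_mem
      (fun ha hb => (WS F n m).add_mem ha hb)
      (fun ha => (WS F n m).neg_mem ha)
      (fun {u v} hv => WS_mul_left hn hchar u v hv)
      (fun {u v} hu => WS_mul_right hn hchar v u hu))
  simp only [TwoSidedIdeal.mem_mk'] at this
  refine this ?_
  rintro w ⟨a, ha, rfl⟩
  refine TwoSidedIdeal.mem_mk' _ _ _ _ _ _ _ |>.mpr ?_
  exact pow_mem_WS ha

lemma WS_le_nil {n : ℕ} : ∀ z ∈ WS F n m, z ∈ nilIdeal F n m := by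
  intro z hz
  have hle : WS F n m ≤ Submodule.restrictScalars F (TwoSidedIdeal.asIdeal (nilIdeal F n m)) := by
    refine Submodule.span_le.mpr ?_
    rintro w ⟨a, ha, rfl⟩
    simp only [SetLike.mem_coe, Submodule.restrictScalars_mem, TwoSidedIdeal.mem_asIdeal]
    exact TwoSidedIdeal.subset_span ⟨a, ha, rfl⟩
  have := hle hz
  simpa using this

end NilFA

namespace NilFA

variable {F : Type} [Field F] {m : ℕ}

local notation "A" => FreeAlgebra F (Fin m)

open Finset NilAux

lemma V_le_WS {n : ℕ} (hn : 0 < n) :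
    Submodule.span F
      {z : FreeAlgebra F (Fin m) | ∃ w : Fin n → FreeAlgebra F (Fin m),
        (∀ i, IsMonomialF F m (w i)) ∧
        z = ∑ π : Equiv.Perm (Fin n), (List.ofFn fun t => w (π t)).prod}
      ≤ WS F n m := by
  refine Submodule.span_le.mpr ?_
  rintro z ⟨w, hw, rfl⟩
  rw [SetLike.mem_coe, ← ident_A (F := F) n w]
  have hsum : ∀ S : Finset (Fin n), (∑ i ∈ S, w i) ∈ augIdeal F m := by
    intro S
    classical
    induction S using Finset.induction with
    | empty => simpa using (augIdeal F m).zero_mem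
    | @insert j S hj IH =>
      rw [Finset.sum_insert hj]
      exact (augIdeal F m).add_mem (monomial_mem_aug (hw j)) IH
  exact Submodule.sum_mem _ fun S _ => Submodule.smul_mem _ _ (pow_mem_WS (hsum S))

lemma WS_le_V {n : ℕ} (hn : 0 < n) (hchar : ringChar F = 0 ∨ n < ringChar F) :
    WS F n m ≤ Submodule.span F
      {z : FreeAlgebra F (Fin m) | ∃ w : Fin n → FreeAlgebra F (Fin m),
        (∀ i, IsMonomialF F m (w i)) ∧
        z = ∑ π : Equiv.Perm (Fin n), (List.ofFn fun t => w (π t)).prod} := by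
  refine Submodule.span_le.mpr ?_
  rintro z ⟨a, ha, rfl⟩
  rw [SetLike.mem_coe]
  set Pm : MultilinearMap F (fun _ : Fin n => FreeAlgebra F (Fin m)) (FreeAlgebra F (Fin m)) :=
    ∑ π : Equiv.Perm (Fin n), (MultilinearMap.mkPiAlgebraFin F n _).domDomCongr π with hPm
  have Pm_apply : ∀ v : Fin n → FreeAlgebra F (Fin m),
      Pm v = ∑ π : Equiv.Perm (Fin n), (List.ofFn fun t => v (π t)).prod := by
    intro v
    rw [hPm, MultilinearMap.sum_apply]
    rfl
  have h1 : Pm (fun _ => a) ∈ Submodule.span F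
      {z | ∃ v : Fin n → FreeAlgebra F (Fin m),
        (∀ i, v i ∈ {w : FreeAlgebra F (Fin m) | IsMonomialF F m w}) ∧ z = Pm v} :=
    multilinear_mem_span Pm _ _ (fun _ => aug_le_mono_span ha)
  have h2 : Submodule.span F
      {z | ∃ v : Fin n → FreeAlgebra F (Fin m),
        (∀ i, v i ∈ {w : FreeAlgebra F (Fin m) | IsMonomialF F m w}) ∧ z = Pm v}
      ≤ Submodule.span F
      {z : FreeAlgebra F (Fin m) | ∃ w : Fin n → FreeAlgebra F (Fin m),
        (∀ i, IsMonomialF F m (w i)) ∧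
        z = ∑ π : Equiv.Perm (Fin n), (List.ofFn fun t => w (π t)).prod} := by
    refine Submodule.span_mono ?_
    rintro z ⟨v, hv, rfl⟩
    exact ⟨v, hv, Pm_apply v⟩
  have h3 : Pm (fun _ => a) = (Nat.factorial n : ℕ) • a ^ n := by
    rw [Pm_apply]
    calc ∑ π : Equiv.Perm (Fin n), (List.ofFn fun _ : Fin n => a).prod
        = ∑ _π : Equiv.Perm (Fin n), a ^ n := by
          refine Finset.sum_congr rfl fun π _ => ?_
          rw [List.ofFn_const, List.prod_replicate]
      _ = (Fintype.card (Equiv.Perm (Fin n))) • a ^ n := by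
          rw [Finset.sum_const, Finset.card_univ]
      _ = (Nat.factorial n : ℕ) • a ^ n := by rw [Fintype.card_perm, Fintype.card_fin]
  have hfac : ((Nat.factorial n : ℕ) : F) ≠ 0 := factorial_cast_ne_zero_of_char hchar
  have key : a ^ n = ((Nat.factorial n : ℕ) : F)⁻¹ • ((Nat.factorial n : ℕ) • a ^ n) := by
    rw [← Nat.cast_smul_eq_nsmul F, smul_smul, inv_mul_cancel₀ hfac, one_smul]
  rw [key, ← h3]
  exact Submodule.smul_mem _ _ (h2 h1)

end NilFA

/-- **Lemma**: if `char(F) = 0` or `char(F) > n`, then `I_{n,m}` is spanned as an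
`F`-vector space by the complete linearizations
`P_n(w_1,…,w_n) = Σ_{π ∈ S_n} w_{π(1)} ⋯ w_{π(n)}` where `w_1,…,w_n` range over all
non-empty monomials in `x_1,…,x_m`. -/
theorem nilIdeal_eq_span_linearizations (F : Type) [Field F] (n m : ℕ)
    (hn : 0 < n) (hm : 0 < m) (hchar : ringChar F = 0 ∨ n < ringChar F) :
    (nilIdeal F n m : Set (FreeAlgebra F (Fin m))) =
      (Submodule.span F
        {z : FreeAlgebra F (Fin m) | ∃ w : Fin n → FreeAlgebra F (Fin m),
          (∀ i, IsMonomialF F m (w i)) ∧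
          z = ∑ π : Equiv.Perm (Fin n), (List.ofFn fun t => w (π t)).prod} :
        Set (FreeAlgebra F (Fin m))) := by
  ext z
  simp only [SetLike.mem_coe]
  constructor
  · intro hz
    exact NilFA.WS_le_V hn hchar (NilFA.nil_le_WS hn hchar z hz)
  · intro hz
    exact NilFA.WS_le_nil z (NilFA.V_le_WS hn hz)
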